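/- Let f ≥ 1 and let ω₁, …, ω_f ∈ ℝ be rationally independent, i.e. for all integers m₁, …, m_f, Σ_k m_k ω_k = 0 implies m₁ = … = m_f = 0. Let H₂(q,p) = Σ_{k=1}^f (ω_k/2)(q_k² + p_k²) and let P be a homogeneous real polynomial of degree n on ℝ^f × ℝ^f satisfying {H₂, P} = 0, where {·,·} is the canonical Poisson bracket. Then: if n is odd, P = 0; and if n is even, P lies in the linear span of the monomials I₁^{α₁} ⋯ I_f^{α_f} with Σ_k α_k = n/2, where I_k = (q_k² + p_k²)/2. -/

import Mathlib

open scoped BigOperators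

/-- The canonical Poisson bracket of polynomials on `ℝ^f × ℝ^f`, with the
variables indexed by `Sum.inl k ↔ q_k` and `Sum.inr k ↔ p_k`:
`{A,B} = Σ_k (∂A/∂q_k ∂B/∂p_k − ∂A/∂p_k ∂B/∂q_k)`. -/
noncomputable def mvPB {f : ℕ} (A B : MvPolynomial (Fin f ⊕ Fin f) ℝ) :
    MvPolynomial (Fin f ⊕ Fin f) ℝ :=
  ∑ k : Fin f,
    (MvPolynomial.pderiv (Sum.inl k) A * MvPolynomial.pderiv (Sum.inr k) B
      - MvPolynomial.pderiv (Sum.inr k) A * MvPolynomial.pderiv (Sum.inl k) B)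

/-- The action polynomial `I_k = (q_k² + p_k²)/2`. -/
noncomputable def actionPoly {f : ℕ} (k : Fin f) : MvPolynomial (Fin f ⊕ Fin f) ℝ :=
  MvPolynomial.C (2⁻¹ : ℝ) *
    ((MvPolynomial.X (Sum.inl k)) ^ 2 + (MvPolynomial.X (Sum.inr k)) ^ 2)

namespace NNFaux

open MvPolynomial

variable {f : ℕ}

noncomputable def Dop (c : Fin f → ℂ) (A : MvPolynomial (Fin f ⊕ Fin f) ℂ) :
    MvPolynomial (Fin f ⊕ Fin f) ℂ :=
  ∑ k : Fin f, MvPolynomial.C (c k) *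
    (MvPolynomial.X (Sum.inl k) * MvPolynomial.pderiv (Sum.inr k) A
      - MvPolynomial.X (Sum.inr k) * MvPolynomial.pderiv (Sum.inl k) A)

noncomputable def Lop (c : Fin f → ℂ) (A : MvPolynomial (Fin f ⊕ Fin f) ℂ) :
    MvPolynomial (Fin f ⊕ Fin f) ℂ :=
  ∑ k : Fin f, MvPolynomial.C (c k) *
    (MvPolynomial.X (Sum.inl k) * MvPolynomial.pderiv (Sum.inl k) A
      - MvPolynomial.X (Sum.inr k) * MvPolynomial.pderiv (Sum.inr k) A)

noncomputable def uu (f : ℕ) : Fin f ⊕ Fin f → MvPolynomial (Fin f ⊕ Fin f) ℂ :=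
  Sum.elim (fun k => MvPolynomial.X (Sum.inl k) + MvPolynomial.C Complex.I * MvPolynomial.X (Sum.inr k))
    (fun k => MvPolynomial.X (Sum.inl k) - MvPolynomial.C Complex.I * MvPolynomial.X (Sum.inr k))

noncomputable def vv (f : ℕ) : Fin f ⊕ Fin f → MvPolynomial (Fin f ⊕ Fin f) ℂ :=
  Sum.elim (fun k => MvPolynomial.C (2⁻¹ : ℂ) * (MvPolynomial.X (Sum.inl k) + MvPolynomial.X (Sum.inr k)))
    (fun k => MvPolynomial.C (-(Complex.I)/2) * (MvPolynomial.X (Sum.inl k) - MvPolynomial.X (Sum.inr k)))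

lemma two_eq_C : (2 : MvPolynomial (Fin f ⊕ Fin f) ℂ) = C (2:ℂ) :=
  (map_ofNat (C : ℂ →+* MvPolynomial (Fin f ⊕ Fin f) ℂ) 2).symm

lemma aeval_uu_vv (j : Fin f ⊕ Fin f) :
    MvPolynomial.aeval (uu f) (vv f j) = MvPolynomial.X j := by
  cases j with
  | inl k =>
      simp only [vv, uu, Sum.elim_inl, Sum.elim_inr, map_mul, map_add, map_sub, aeval_X, aeval_C,
        MvPolynomial.algebraMap_eq]
      ring_nf
      rw [two_eq_C, mul_comm, ← mul_assoc, ← C_mul]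
      norm_num
  | inr k =>
      simp only [vv, uu, Sum.elim_inl, Sum.elim_inr, map_mul, map_add, map_sub, aeval_X, aeval_C,
        MvPolynomial.algebraMap_eq]
      ring_nf
      rw [two_eq_C, mul_comm, ← mul_assoc, ← C_mul]
      have h2 : C ((2:ℂ) * (Complex.I * (-1 / 2) * Complex.I)) = (1 : MvPolynomial (Fin f ⊕ Fin f) ℂ) := by
        have : (2:ℂ) * (Complex.I * (-1 / 2) * Complex.I) = 1 := by
          ring_nf; rw [Complex.I_sq]; ring
        rw [this, C_1]
      rw [← C_mul, h2, one_mul]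

lemma aeval_uu_aeval_vv (A : MvPolynomial (Fin f ⊕ Fin f) ℂ) :
    MvPolynomial.aeval (uu f) (MvPolynomial.aeval (vv f) A) = A := by
  have h : (MvPolynomial.aeval (uu f)).comp (MvPolynomial.aeval (vv f)) =
      AlgHom.id ℂ (MvPolynomial (Fin f ⊕ Fin f) ℂ) := by
    apply MvPolynomial.algHom_ext
    intro j
    simpa using aeval_uu_vv j
  calc MvPolynomial.aeval (uu f) (MvPolynomial.aeval (vv f) A)
      = ((MvPolynomial.aeval (uu f)).comp (MvPolynomial.aeval (vv f))) A := rfl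
    _ = A := by rw [h]; rfl

lemma Dop_add (c : Fin f → ℂ) (A B : MvPolynomial (Fin f ⊕ Fin f) ℂ) :
    Dop c (A + B) = Dop c A + Dop c B := by
  simp only [Dop, map_add]
  rw [← Finset.sum_add_distrib]
  exact Finset.sum_congr rfl fun k _ => by ring

lemma Dop_mul (c : Fin f → ℂ) (A B : MvPolynomial (Fin f ⊕ Fin f) ℂ) :
    Dop c (A * B) = Dop c A * B + A * Dop c B := by
  simp only [Dop, pderiv_mul, Finset.sum_mul, Finset.mul_sum]
  rw [← Finset.sum_add_distrib]
  exact Finset.sum_congr rfl fun k _ => by ring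

lemma Dop_C (c : Fin f → ℂ) (a : ℂ) : Dop c (MvPolynomial.C a) = 0 := by
  simp [Dop, pderiv_C]

lemma Lop_add (c : Fin f → ℂ) (A B : MvPolynomial (Fin f ⊕ Fin f) ℂ) :
    Lop c (A + B) = Lop c A + Lop c B := by
  simp only [Lop, map_add]
  rw [← Finset.sum_add_distrib]
  exact Finset.sum_congr rfl fun k _ => by ring

lemma Lop_mul (c : Fin f → ℂ) (A B : MvPolynomial (Fin f ⊕ Fin f) ℂ) :
    Lop c (A * B) = Lop c A * B + A * Lop c B := by
  simp only [Lop, pderiv_mul, Finset.sum_mul, Finset.mul_sum]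
  rw [← Finset.sum_add_distrib]
  exact Finset.sum_congr rfl fun k _ => by ring

lemma Lop_C (c : Fin f → ℂ) (a : ℂ) : Lop c (MvPolynomial.C a) = 0 := by
  simp [Lop, pderiv_C]

lemma Dop_X_inl (c : Fin f → ℂ) (k : Fin f) :
    Dop c (MvPolynomial.X (Sum.inl k)) = -(MvPolynomial.C (c k) * MvPolynomial.X (Sum.inr k)) := by
  rw [Dop, Finset.sum_eq_single_of_mem k (Finset.mem_univ k)]
  · have h1 : pderiv (Sum.inr k) (X (Sum.inl k) : MvPolynomial (Fin f ⊕ Fin f) ℂ) = 0 :=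
      pderiv_X_of_ne (by simp)
    rw [h1, pderiv_X_self]; ring
  · intro b _ hb
    have h1 : pderiv (Sum.inr b) (X (Sum.inl k) : MvPolynomial (Fin f ⊕ Fin f) ℂ) = 0 :=
      pderiv_X_of_ne (by simp)
    have h2 : pderiv (Sum.inl b) (X (Sum.inl k) : MvPolynomial (Fin f ⊕ Fin f) ℂ) = 0 :=
      pderiv_X_of_ne (by simp [Ne.symm hb])
    rw [h1, h2]; ring

lemma Dop_X_inr (c : Fin f → ℂ) (k : Fin f) :
    Dop c (MvPolynomial.X (Sum.inr k)) = MvPolynomial.C (c k) * MvPolynomial.X (Sum.inl k) := by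
  rw [Dop, Finset.sum_eq_single_of_mem k (Finset.mem_univ k)]
  · have h1 : pderiv (Sum.inl k) (X (Sum.inr k) : MvPolynomial (Fin f ⊕ Fin f) ℂ) = 0 :=
      pderiv_X_of_ne (by simp)
    rw [h1, pderiv_X_self]; ring
  · intro b _ hb
    have h1 : pderiv (Sum.inr b) (X (Sum.inr k) : MvPolynomial (Fin f ⊕ Fin f) ℂ) = 0 :=
      pderiv_X_of_ne (by simp [Ne.symm hb])
    have h2 : pderiv (Sum.inl b) (X (Sum.inr k) : MvPolynomial (Fin f ⊕ Fin f) ℂ) = 0 :=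
      pderiv_X_of_ne (by simp)
    rw [h1, h2]; ring

lemma Lop_vv_inl (c : Fin f → ℂ) (k : Fin f) :
    Lop c (vv f (Sum.inl k)) = MvPolynomial.C (c k * 2⁻¹) *
      (MvPolynomial.X (Sum.inl k) - MvPolynomial.X (Sum.inr k)) := by
  rw [Lop, Finset.sum_eq_single_of_mem k (Finset.mem_univ k)]
  · simp only [vv, Sum.elim_inl, pderiv_C_mul, map_add]
    have h1 : pderiv (Sum.inl k) (X (Sum.inr k) : MvPolynomial (Fin f ⊕ Fin f) ℂ) = 0 :=
      pderiv_X_of_ne (by simp)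
    have h2 : pderiv (Sum.inr k) (X (Sum.inl k) : MvPolynomial (Fin f ⊕ Fin f) ℂ) = 0 :=
      pderiv_X_of_ne (by simp)
    rw [pderiv_X_self, pderiv_X_self, h1, h2]
    have hC : (C (c k * 2⁻¹) : MvPolynomial (Fin f ⊕ Fin f) ℂ) = C (c k) * C (2⁻¹ : ℂ) :=
      map_mul C _ _
    linear_combination (X (Sum.inr k) - X (Sum.inl k)) * hC
  · intro b _ hb
    simp only [vv, Sum.elim_inl, pderiv_C_mul, map_add]
    have h1 : pderiv (Sum.inl b) (X (Sum.inl k) : MvPolynomial (Fin f ⊕ Fin f) ℂ) = 0 :=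
      pderiv_X_of_ne (by simp [Ne.symm hb])
    have h2 : pderiv (Sum.inl b) (X (Sum.inr k) : MvPolynomial (Fin f ⊕ Fin f) ℂ) = 0 :=
      pderiv_X_of_ne (by simp)
    have h3 : pderiv (Sum.inr b) (X (Sum.inl k) : MvPolynomial (Fin f ⊕ Fin f) ℂ) = 0 :=
      pderiv_X_of_ne (by simp)
    have h4 : pderiv (Sum.inr b) (X (Sum.inr k) : MvPolynomial (Fin f ⊕ Fin f) ℂ) = 0 :=
      pderiv_X_of_ne (by simp [Ne.symm hb])
    rw [h1, h2, h3, h4]; ring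

lemma Lop_vv_inr (c : Fin f → ℂ) (k : Fin f) :
    Lop c (vv f (Sum.inr k)) = MvPolynomial.C (c k * (-(Complex.I)/2)) *
      (MvPolynomial.X (Sum.inl k) + MvPolynomial.X (Sum.inr k)) := by
  rw [Lop, Finset.sum_eq_single_of_mem k (Finset.mem_univ k)]
  · simp only [vv, Sum.elim_inr, pderiv_C_mul, map_sub]
    have h1 : pderiv (Sum.inl k) (X (Sum.inr k) : MvPolynomial (Fin f ⊕ Fin f) ℂ) = 0 :=
      pderiv_X_of_ne (by simp)
    have h2 : pderiv (Sum.inr k) (X (Sum.inl k) : MvPolynomial (Fin f ⊕ Fin f) ℂ) = 0 :=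
      pderiv_X_of_ne (by simp)
    rw [pderiv_X_self, pderiv_X_self, h1, h2]
    have hC : (C (c k * (-(Complex.I)/2)) : MvPolynomial (Fin f ⊕ Fin f) ℂ)
        = C (c k) * C (-(Complex.I)/2 : ℂ) := map_mul C _ _
    linear_combination (-(X (Sum.inl k) + X (Sum.inr k))) * hC
  · intro b _ hb
    simp only [vv, Sum.elim_inr, pderiv_C_mul, map_sub]
    have h1 : pderiv (Sum.inl b) (X (Sum.inl k) : MvPolynomial (Fin f ⊕ Fin f) ℂ) = 0 :=
      pderiv_X_of_ne (by simp [Ne.symm hb])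
    have h2 : pderiv (Sum.inl b) (X (Sum.inr k) : MvPolynomial (Fin f ⊕ Fin f) ℂ) = 0 :=
      pderiv_X_of_ne (by simp)
    have h3 : pderiv (Sum.inr b) (X (Sum.inl k) : MvPolynomial (Fin f ⊕ Fin f) ℂ) = 0 :=
      pderiv_X_of_ne (by simp)
    have h4 : pderiv (Sum.inr b) (X (Sum.inr k) : MvPolynomial (Fin f ⊕ Fin f) ℂ) = 0 :=
      pderiv_X_of_ne (by simp [Ne.symm hb])
    rw [h1, h2, h3, h4]; ring

lemma key_comm (c : Fin f → ℂ) (A : MvPolynomial (Fin f ⊕ Fin f) ℂ) :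
    MvPolynomial.aeval (vv f) (Dop c A) =
      Lop (fun k => Complex.I * c k) (MvPolynomial.aeval (vv f) A) := by
  induction A using MvPolynomial.induction_on with
  | C a => rw [Dop_C, map_zero, aeval_C, MvPolynomial.algebraMap_eq, Lop_C]
  | add p q hp hq => rw [Dop_add, map_add, hp, hq, map_add, Lop_add]
  | mul_X p j hp =>
      rw [Dop_mul, map_add, map_mul, map_mul, hp, map_mul, Lop_mul]
      congr 1
      refine congrArg (fun x => MvPolynomial.aeval (vv f) p * x) ?_
      cases j with
      | inl k =>
          rw [Dop_X_inl, map_neg, map_mul, aeval_C]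
          simp only [aeval_X]
          rw [Lop_vv_inl, MvPolynomial.algebraMap_eq]
          simp only [vv, Sum.elim_inr]
          have hC : (C (Complex.I * c k * 2⁻¹) : MvPolynomial (Fin f ⊕ Fin f) ℂ)
              = -(C (c k) * C (-(Complex.I)/2 : ℂ)) := by
            rw [← map_mul, ← map_neg]
            congr 1
            ring
          linear_combination (X (Sum.inr k) - X (Sum.inl k)) * hC
      | inr k =>
          rw [Dop_X_inr, map_mul, aeval_C]
          simp only [aeval_X]
          rw [Lop_vv_inr, MvPolynomial.algebraMap_eq]
          simp only [vv, Sum.elim_inl]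
          have hc : Complex.I * c k * (-(Complex.I)/2) = c k * 2⁻¹ := by
            linear_combination (-(c k)/2) * Complex.I_mul_I
          have hC : (C (Complex.I * c k * (-(Complex.I)/2)) : MvPolynomial (Fin f ⊕ Fin f) ℂ)
              = C (c k) * C (2⁻¹ : ℂ) := by rw [hc, map_mul]
          linear_combination (-(X (Sum.inl k) + X (Sum.inr k))) * hC

lemma coeff_pderiv {σ : Type*} [DecidableEq σ] (i : σ) (A : MvPolynomial σ ℂ) (m : σ →₀ ℕ) :
    MvPolynomial.coeff m (MvPolynomial.pderiv i A)
      = ((m i : ℂ) + 1) * MvPolynomial.coeff (m + Finsupp.single i 1) A := by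
  induction A using MvPolynomial.induction_on' with
  | add p q hp hq => simp [hp, hq, mul_add]
  | monomial s a =>
      rw [pderiv_monomial, coeff_monomial, coeff_monomial]
      by_cases h : s = m + Finsupp.single i 1
      · subst h
        rw [if_pos (add_tsub_cancel_right ..), if_pos rfl]
        have : ((m + Finsupp.single i 1 : _ →₀ ℕ)) i = m i + 1 := by
          simp [Finsupp.add_apply, Finsupp.single_eq_same]
        rw [this]
        push_cast
        ring
      · rw [if_neg h, mul_zero]
        by_cases h2 : s - Finsupp.single i 1 = m
        · rw [if_pos h2]
          have hsi : s i = 0 := by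
            by_contra hne
            apply h
            have hle : Finsupp.single i 1 ≤ s := by
              rw [Finsupp.single_le_iff]
              omega
            rw [← h2, tsub_add_cancel_of_le hle]
          rw [hsi]
          simp
        · rw [if_neg h2]

lemma coeff_X_mul_pderiv {σ : Type*} [DecidableEq σ] (i : σ) (A : MvPolynomial σ ℂ) (m : σ →₀ ℕ) :
    MvPolynomial.coeff m (MvPolynomial.X i * MvPolynomial.pderiv i A)
      = (m i : ℂ) * MvPolynomial.coeff m A := by
  rw [MvPolynomial.coeff_X_mul']
  by_cases h : i ∈ m.support
  · rw [if_pos h, coeff_pderiv]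
    have hmi : 1 ≤ m i := by
      rw [Finsupp.mem_support_iff] at h
      omega
    have h1 : ((m - Finsupp.single i 1 : _ →₀ ℕ)) i = m i - 1 := by
      simp [Finsupp.tsub_apply, Finsupp.single_eq_same]
    have h2 : m - Finsupp.single i 1 + Finsupp.single i 1 = m := by
      apply tsub_add_cancel_of_le
      rw [Finsupp.single_le_iff]
      exact hmi
    rw [h1, h2]
    congr 1
    have : (m i - 1 : ℕ) + 1 = m i := by omega
    rw [← this]
    push_cast
    ring
  · rw [if_neg h]
    rw [Finsupp.notMem_support_iff] at h
    rw [h]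
    simp

lemma coeff_Lop (c : Fin f → ℂ) (A : MvPolynomial (Fin f ⊕ Fin f) ℂ)
    (m : (Fin f ⊕ Fin f) →₀ ℕ) :
    MvPolynomial.coeff m (Lop c A)
      = (∑ k : Fin f, c k * ((m (Sum.inl k) : ℂ) - (m (Sum.inr k) : ℂ)))
          * MvPolynomial.coeff m A := by
  rw [Lop, MvPolynomial.coeff_sum]
  rw [Finset.sum_mul]
  refine Finset.sum_congr rfl fun k _ => ?_
  rw [coeff_C_mul, coeff_sub, coeff_X_mul_pderiv, coeff_X_mul_pderiv]
  ring

lemma uu_mul (k : Fin f) :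
    uu f (Sum.inl k) * uu f (Sum.inr k)
      = MvPolynomial.X (Sum.inl k) ^ 2 + MvPolynomial.X (Sum.inr k) ^ 2 := by
  have hI : (C Complex.I : MvPolynomial (Fin f ⊕ Fin f) ℂ) * C Complex.I = -1 := by
    rw [← map_mul, Complex.I_mul_I, map_neg, map_one]
  simp only [uu, Sum.elim_inl, Sum.elim_inr]
  linear_combination (-(X (Sum.inr k) ^ 2 : MvPolynomial (Fin f ⊕ Fin f) ℂ)) * hI

lemma C2_mul_map_actionPoly (k : Fin f) :
    MvPolynomial.C (2 : ℂ) * MvPolynomial.map (algebraMap ℝ ℂ) (actionPoly k)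
      = MvPolynomial.X (Sum.inl k) ^ 2 + MvPolynomial.X (Sum.inr k) ^ 2 := by
  rw [actionPoly]
  rw [map_mul, map_C]
  have : (algebraMap ℝ ℂ) (2⁻¹ : ℝ) = (2⁻¹ : ℂ) := by
    simp [Complex.ofReal_inv]
  rw [this, ← mul_assoc, ← map_mul]
  norm_num

lemma aeval_uu_monomial_balanced (m : (Fin f ⊕ Fin f) →₀ ℕ) (c : ℂ)
    (hb : ∀ k, m (Sum.inr k) = m (Sum.inl k)) :
    MvPolynomial.aeval (uu f) (MvPolynomial.monomial m c)
      = MvPolynomial.C (c * 2 ^ (∑ k : Fin f, m (Sum.inl k))) *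
        MvPolynomial.map (algebraMap ℝ ℂ) (∏ k : Fin f, actionPoly k ^ (m (Sum.inl k))) := by
  rw [aeval_monomial]
  rw [Finsupp.prod_fintype _ _ (fun j => pow_zero _)]
  rw [Fintype.prod_sum_type]
  have h1 : ∀ k : Fin f, uu f (Sum.inr k) ^ m (Sum.inr k) = uu f (Sum.inr k) ^ m (Sum.inl k) := by
    intro k; rw [hb k]
  calc (algebraMap ℂ (MvPolynomial (Fin f ⊕ Fin f) ℂ)) c *
        ((∏ k : Fin f, uu f (Sum.inl k) ^ m (Sum.inl k)) *
          ∏ k : Fin f, uu f (Sum.inr k) ^ m (Sum.inr k))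
      = C c * ∏ k : Fin f, (uu f (Sum.inl k) * uu f (Sum.inr k)) ^ m (Sum.inl k) := by
        rw [MvPolynomial.algebraMap_eq]
        congr 1
        rw [← Finset.prod_mul_distrib]
        refine Finset.prod_congr rfl fun k _ => ?_
        rw [h1 k, ← mul_pow]
    _ = C c * ∏ k : Fin f, (MvPolynomial.C (2:ℂ) * MvPolynomial.map (algebraMap ℝ ℂ) (actionPoly k)) ^ m (Sum.inl k) := by
        congr 1
        exact Finset.prod_congr rfl fun k _ => by rw [uu_mul, C2_mul_map_actionPoly]
    _ = MvPolynomial.C (c * 2 ^ (∑ k : Fin f, m (Sum.inl k))) *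
        MvPolynomial.map (algebraMap ℝ ℂ) (∏ k : Fin f, actionPoly k ^ (m (Sum.inl k))) := by
        simp only [mul_pow, Finset.prod_mul_distrib, ← map_pow, ← map_prod]
        rw [Finset.prod_pow_eq_pow_sum, ← mul_assoc, ← map_mul]

lemma actionPoly_prod_homogeneous (α : Fin f → ℕ) :
    (∏ k : Fin f, actionPoly k ^ (α k)).IsHomogeneous (∑ k : Fin f, 2 * α k) := by
  apply MvPolynomial.IsHomogeneous.prod
  intro k _
  have h2 : (actionPoly k : MvPolynomial (Fin f ⊕ Fin f) ℝ).IsHomogeneous 2 := by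
    rw [actionPoly]
    have := ((MvPolynomial.isHomogeneous_X_pow (R := ℝ) (Sum.inl k : Fin f ⊕ Fin f) 2).add
      (MvPolynomial.isHomogeneous_X_pow (Sum.inr k) 2)).C_mul (2⁻¹ : ℝ)
    simpa using this
  simpa [mul_comm] using h2.pow (α k)

end NNFaux

open MvPolynomial in
/-- If the frequencies `ω₁,…,ω_f` are rationally independent
and `P` is a homogeneous polynomial of degree `n` Poisson-commuting with
`H₂ = Σ_k (ω_k/2)(q_k² + p_k²)`, then `P = 0` if `n` is odd, while if `n` is
even `P` lies in the span of the monomials `I₁^{α₁} ⋯ I_f^{α_f}` with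
`|α| = n/2`, where `I_k = (q_k² + p_k²)/2`. -/
theorem nonresonant_normal_form_kernel
    (f : ℕ) (hf : 1 ≤ f) (ω : Fin f → ℝ)
    (hω : ∀ m : Fin f → ℤ, (∑ k : Fin f, (m k : ℝ) * ω k) = 0 → ∀ k, m k = 0)
    (H₂ : MvPolynomial (Fin f ⊕ Fin f) ℝ)
    (hH₂ : H₂ = ∑ k : Fin f, MvPolynomial.C (ω k / 2) *
      ((MvPolynomial.X (Sum.inl k)) ^ 2 + (MvPolynomial.X (Sum.inr k)) ^ 2))
    (n : ℕ) (P : MvPolynomial (Fin f ⊕ Fin f) ℝ)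
    (hP : P.IsHomogeneous n)
    (hcomm : mvPB H₂ P = 0) :
    (Odd n → P = 0) ∧
    (Even n → P ∈ Submodule.span ℝ
      {m : MvPolynomial (Fin f ⊕ Fin f) ℝ | ∃ α : Fin f → ℕ,
        (∑ k : Fin f, α k = n / 2) ∧ m = ∏ k : Fin f, (actionPoly k) ^ (α k)}) := by
  classical
  -- derivatives of H₂
  have h2C : (2 : MvPolynomial (Fin f ⊕ Fin f) ℝ) = MvPolynomial.C (2:ℝ) :=
    (map_ofNat (MvPolynomial.C : ℝ →+* MvPolynomial (Fin f ⊕ Fin f) ℝ) 2).symm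
  have hpdl : ∀ k : Fin f, pderiv (Sum.inl k) H₂ = C (ω k) * X (Sum.inl k) := by
    intro k
    rw [hH₂, map_sum, Finset.sum_eq_single_of_mem k (Finset.mem_univ k)]
    · rw [pderiv_C_mul, map_add]
      have e1 : pderiv (Sum.inl k) ((X (Sum.inl k) : MvPolynomial (Fin f ⊕ Fin f) ℝ)^2)
          = 2 * X (Sum.inl k) := by
        rw [pow_two, pderiv_mul, pderiv_X_self]; ring
      have e2 : pderiv (Sum.inl k) ((X (Sum.inr k) : MvPolynomial (Fin f ⊕ Fin f) ℝ)^2) = 0 := by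
        rw [pow_two, pderiv_mul, pderiv_X_of_ne (by simp)]; ring
      rw [e1, e2, add_zero]
      have hC : (C (ω k) : MvPolynomial (Fin f ⊕ Fin f) ℝ) = C (ω k / 2) * 2 := by
        rw [h2C, ← map_mul]; congr 1; ring
      linear_combination (-(X (Sum.inl k) : MvPolynomial (Fin f ⊕ Fin f) ℝ)) * hC
    · intro b _ hb
      rw [pderiv_C_mul, map_add]
      have e1 : pderiv (Sum.inl k) ((X (Sum.inl b) : MvPolynomial (Fin f ⊕ Fin f) ℝ)^2) = 0 := by
        rw [pow_two, pderiv_mul, pderiv_X_of_ne (by simp [hb])]; ring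
      have e2 : pderiv (Sum.inl k) ((X (Sum.inr b) : MvPolynomial (Fin f ⊕ Fin f) ℝ)^2) = 0 := by
        rw [pow_two, pderiv_mul, pderiv_X_of_ne (by simp)]; ring
      rw [e1, e2]; ring
  have hpdr : ∀ k : Fin f, pderiv (Sum.inr k) H₂ = C (ω k) * X (Sum.inr k) := by
    intro k
    rw [hH₂, map_sum, Finset.sum_eq_single_of_mem k (Finset.mem_univ k)]
    · rw [pderiv_C_mul, map_add]
      have e1 : pderiv (Sum.inr k) ((X (Sum.inr k) : MvPolynomial (Fin f ⊕ Fin f) ℝ)^2)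
          = 2 * X (Sum.inr k) := by
        rw [pow_two, pderiv_mul, pderiv_X_self]; ring
      have e2 : pderiv (Sum.inr k) ((X (Sum.inl k) : MvPolynomial (Fin f ⊕ Fin f) ℝ)^2) = 0 := by
        rw [pow_two, pderiv_mul, pderiv_X_of_ne (by simp)]; ring
      rw [e1, e2, zero_add]
      have hC : (C (ω k) : MvPolynomial (Fin f ⊕ Fin f) ℝ) = C (ω k / 2) * 2 := by
        rw [h2C, ← map_mul]; congr 1; ring
      linear_combination (-(X (Sum.inr k) : MvPolynomial (Fin f ⊕ Fin f) ℝ)) * hC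
    · intro b _ hb
      rw [pderiv_C_mul, map_add]
      have e1 : pderiv (Sum.inr k) ((X (Sum.inl b) : MvPolynomial (Fin f ⊕ Fin f) ℝ)^2) = 0 := by
        rw [pow_two, pderiv_mul, pderiv_X_of_ne (by simp)]; ring
      have e2 : pderiv (Sum.inr k) ((X (Sum.inr b) : MvPolynomial (Fin f ⊕ Fin f) ℝ)^2) = 0 := by
        rw [pow_two, pderiv_mul, pderiv_X_of_ne (by simp [hb])]; ring
      rw [e1, e2]; ring
  set Q : MvPolynomial (Fin f ⊕ Fin f) ℂ := MvPolynomial.map (algebraMap ℝ ℂ) P with hQdef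
  have hD : NNFaux.Dop (fun k => ((ω k : ℝ) : ℂ)) Q = 0 := by
    have h0 := congrArg (MvPolynomial.map (algebraMap ℝ ℂ)) hcomm
    rw [map_zero] at h0
    rw [← h0]
    simp only [mvPB, NNFaux.Dop]
    rw [map_sum]
    refine Finset.sum_congr rfl fun k _ => ?_
    rw [hpdl k, hpdr k, map_sub, map_mul, map_mul, map_mul, map_mul, map_C, map_X, map_X,
      ← MvPolynomial.pderiv_map (φ := algebraMap ℝ ℂ) (f := P) (i := Sum.inr k),
      ← MvPolynomial.pderiv_map (φ := algebraMap ℝ ℂ) (f := P) (i := Sum.inl k), ← hQdef]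
    have : (algebraMap ℝ ℂ) (ω k) = ((ω k : ℝ) : ℂ) := rfl
    rw [this]
    ring
  set G := MvPolynomial.aeval (NNFaux.vv f) Q with hGdef
  have hL : NNFaux.Lop (fun k => Complex.I * ((ω k : ℝ) : ℂ)) G = 0 := by
    rw [hGdef, ← NNFaux.key_comm, hD, map_zero]
  have hbal : ∀ m ∈ G.support, ∀ k : Fin f, m (Sum.inr k) = m (Sum.inl k) := by
    intro m hm
    have h1 : (∑ k : Fin f, Complex.I * ((ω k : ℝ) : ℂ)
          * ((m (Sum.inl k) : ℂ) - (m (Sum.inr k) : ℂ))) * MvPolynomial.coeff m G = 0 := by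
      rw [← NNFaux.coeff_Lop, hL, MvPolynomial.coeff_zero]
    have hc0 : MvPolynomial.coeff m G ≠ 0 := MvPolynomial.mem_support_iff.mp hm
    have h2 := (mul_eq_zero.mp h1).resolve_right hc0
    have h4 : Complex.I * (∑ k : Fin f, ((ω k : ℝ) : ℂ)
        * ((m (Sum.inl k) : ℂ) - (m (Sum.inr k) : ℂ))) = 0 := by
      rw [Finset.mul_sum, ← h2]
      exact Finset.sum_congr rfl fun k _ => by ring
    have h5 := (mul_eq_zero.mp h4).resolve_left Complex.I_ne_zero
    have h6 : (∑ k : Fin f, (((m (Sum.inl k) : ℤ) - (m (Sum.inr k) : ℤ) : ℤ) : ℝ) * ω k) = 0 := by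
      have hc : ((∑ k : Fin f, (((m (Sum.inl k) : ℤ) - (m (Sum.inr k) : ℤ) : ℤ) : ℝ) * ω k : ℝ) : ℂ)
          = 0 := by
        push_cast
        rw [← h5]
        exact Finset.sum_congr rfl fun k _ => by push_cast; ring
      exact_mod_cast hc
    intro k
    have := hω (fun k => (m (Sum.inl k) : ℤ) - (m (Sum.inr k) : ℤ)) h6 k
    omega
  have hQrep : Q = ∑ m ∈ G.support,
      MvPolynomial.C (MvPolynomial.coeff m G * 2 ^ (∑ k : Fin f, m (Sum.inl k))) *
        MvPolynomial.map (algebraMap ℝ ℂ) (∏ k : Fin f, actionPoly k ^ (m (Sum.inl k))) := by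
    have hQG : Q = MvPolynomial.aeval (NNFaux.uu f) G := by
      rw [hGdef, NNFaux.aeval_uu_aeval_vv]
    rw [hQG]
    conv_lhs => rw [MvPolynomial.as_sum G]
    rw [map_sum]
    exact Finset.sum_congr rfl fun m hm => NNFaux.aeval_uu_monomial_balanced m _ (hbal m hm)
  have hPrep : P = ∑ m ∈ G.support,
      ((MvPolynomial.coeff m G * 2 ^ (∑ k : Fin f, m (Sum.inl k))).re) •
        ∏ k : Fin f, actionPoly k ^ (m (Sum.inl k)) := by
    apply MvPolynomial.ext
    intro e
    have hQe : ((MvPolynomial.coeff e P : ℝ) : ℂ) = MvPolynomial.coeff e Q := by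
      rw [hQdef, MvPolynomial.coeff_map]
      rfl
    have h7 : MvPolynomial.coeff e Q = ∑ m ∈ G.support,
        (MvPolynomial.coeff m G * 2 ^ (∑ k : Fin f, m (Sum.inl k))) *
          ((MvPolynomial.coeff e (∏ k : Fin f, actionPoly k ^ (m (Sum.inl k))) : ℝ) : ℂ) := by
      rw [hQrep, MvPolynomial.coeff_sum]
      refine Finset.sum_congr rfl fun m _ => ?_
      rw [MvPolynomial.coeff_C_mul, MvPolynomial.coeff_map]
      rfl
    calc MvPolynomial.coeff e P = (((MvPolynomial.coeff e P : ℝ) : ℂ)).re := by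
          rw [Complex.ofReal_re]
      _ = (MvPolynomial.coeff e Q).re := by rw [hQe]
      _ = ∑ m ∈ G.support, (MvPolynomial.coeff m G * 2 ^ (∑ k : Fin f, m (Sum.inl k))).re *
            MvPolynomial.coeff e (∏ k : Fin f, actionPoly k ^ (m (Sum.inl k))) := by
          rw [h7, Complex.re_sum]
          refine Finset.sum_congr rfl fun m _ => ?_
          simp [Complex.mul_re]
      _ = MvPolynomial.coeff e (∑ m ∈ G.support,
            ((MvPolynomial.coeff m G * 2 ^ (∑ k : Fin f, m (Sum.inl k))).re) •
              ∏ k : Fin f, actionPoly k ^ (m (Sum.inl k))) := by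
          rw [MvPolynomial.coeff_sum]
          refine Finset.sum_congr rfl fun m _ => ?_
          rw [MvPolynomial.coeff_smul, smul_eq_mul]
  have hPfilter : P = ∑ m ∈ G.support.filter (fun m => n = ∑ k : Fin f, 2 * m (Sum.inl k)),
      ((MvPolynomial.coeff m G * 2 ^ (∑ k : Fin f, m (Sum.inl k))).re) •
        ∏ k : Fin f, actionPoly k ^ (m (Sum.inl k)) := by
    have hcomp : MvPolynomial.homogeneousComponent n P = P := by
      rw [MvPolynomial.homogeneousComponent_of_mem
        ((MvPolynomial.mem_homogeneousSubmodule _ _).mpr hP), if_pos rfl]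
    calc P = MvPolynomial.homogeneousComponent n P := hcomp.symm
      _ = ∑ m ∈ G.support,
          ((MvPolynomial.coeff m G * 2 ^ (∑ k : Fin f, m (Sum.inl k))).re) •
            MvPolynomial.homogeneousComponent n (∏ k : Fin f, actionPoly k ^ (m (Sum.inl k))) := by
          conv_lhs => rw [hPrep]
          rw [map_sum]
          exact Finset.sum_congr rfl fun m _ => by rw [map_smul]
      _ = ∑ m ∈ G.support, (if n = ∑ k : Fin f, 2 * m (Sum.inl k) then
            ((MvPolynomial.coeff m G * 2 ^ (∑ k : Fin f, m (Sum.inl k))).re) •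
              ∏ k : Fin f, actionPoly k ^ (m (Sum.inl k)) else 0) := by
          refine Finset.sum_congr rfl fun m _ => ?_
          rw [MvPolynomial.homogeneousComponent_of_mem
            ((MvPolynomial.mem_homogeneousSubmodule _ _).mpr
              (NNFaux.actionPoly_prod_homogeneous (fun k => m (Sum.inl k))))]
          split_ifs with h
          · rfl
          · rw [smul_zero]
      _ = _ := (Finset.sum_filter _ _).symm
  constructor
  · intro hodd
    rw [hPfilter]
    have hemp : G.support.filter (fun m => n = ∑ k : Fin f, 2 * m (Sum.inl k)) = ∅ := by
      rw [Finset.filter_eq_empty_iff]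
      intro m _ hcond
      have h2s : (∑ k : Fin f, 2 * m (Sum.inl k)) = 2 * ∑ k : Fin f, m (Sum.inl k) :=
        (Finset.mul_sum _ _ _).symm
      obtain ⟨t, ht⟩ := hodd
      omega
    rw [hemp, Finset.sum_empty]
  · intro _
    rw [hPfilter]
    apply Submodule.sum_mem
    intro m hm
    rw [Finset.mem_filter] at hm
    apply Submodule.smul_mem
    apply Submodule.subset_span
    refine ⟨fun k => m (Sum.inl k), ?_, rfl⟩
    show (∑ k : Fin f, m (Sum.inl k)) = n / 2
    have h2s : (∑ k : Fin f, 2 * m (Sum.inl k)) = 2 * ∑ k : Fin f, m (Sum.inl k) :=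
      (Finset.mul_sum _ _ _).symm
    have := hm.2
    omega
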